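/- The subring R = {[[a,b],[0,0]] : a ∈ {0,2}, b ∈ ℤ/4ℤ} of M₂(ℤ/4ℤ) satisfies 2xy = 2yx for all x, y ∈ R, yet R is not commutative. Hence the identity 2ab + 2ba = 0 (equivalently 2ab = 2ba in characteristic 4) does not imply commutativity. -/
import Mathlib


def S : Set (Matrix (Fin 2) (Fin 2) (ZMod 4)) :=
  {M | (M 0 0 = 0 ∨ M 0 0 = 2) ∧ M 1 0 = 0 ∧ M 1 1 = 0}

/-- S satisfies 2xy = 2yx for all x, y, yet S is not commutative. -/
theorem stmt_10 :
    (∀ x ∈ S, ∀ y ∈ S, x * y + x * y = y * x + y * x) ∧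
    (∃ x ∈ S, ∃ y ∈ S, x * y ≠ y * x) := by
  have key : ∀ v : ZMod 4, 2 * v + 2 * v = 0 := by decide
  constructor
  · rintro x ⟨ha, hx10, hx11⟩ y ⟨hc, hy10, hy11⟩
    ext i j
    fin_cases i <;> fin_cases j <;>
      simp [Matrix.mul_apply, Fin.sum_univ_succ, hx10, hx11, hy10, hy11] <;>
      rcases ha with ha | ha <;> rcases hc with hc | hc <;>
      simp [ha, hc, key]
  · refine ⟨!![2,0;0,0], ⟨Or.inr rfl, rfl, rfl⟩, !![0,1;0,0], ⟨Or.inl rfl, rfl, rfl⟩, ?_⟩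
    intro h
    have := congrFun (congrFun h 0) 1
    simp [Matrix.mul_apply, Fin.sum_univ_succ] at this
    exact absurd this (by decide)
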